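/- Let E be a complex Banach space, H : ℝ → B(E) continuous in operator norm, P ∈ B(E) an idempotent (P∘P = P), Q := 1 − P, and t₀ ≤ t. Define the Picard–Dyson terms Uₙ(t,t₀) := (−i)ⁿ ∫_{t₀}^{t} dt₁ ∫_{t₀}^{t₁} dt₂ ⋯ ∫_{t₀}^{t_{n−1}} dtₙ H(t₁)H(t₂)⋯H(tₙ) and U(t,t₀) := 1 + Σ_{n≥1} Uₙ(t,t₀) (this series converges absolutely in operator norm). Define θ_P(s) := Q if s > 0 and θ_P(s) := −P if s ≤ 0, and Cₙ(t,t₀) := (−i)ⁿ ∫_{[t₀,t]ⁿ} H(t₁) θ_P(t₁−t₂) H(t₂) ⋯ θ_P(t_{n−1}−tₙ) H(tₙ) dt₁⋯dtₙ. Assume Σ_{n≥1} ‖Cₙ(t,t₀)‖ < ∞ and set K(t,t₀) := Σ_{n≥1} Cₙ(t,t₀). Then U(t,t₀)P = (P + Q K(t,t₀) P)·(P U(t,t₀) P). -/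

import Mathlib

set_option maxHeartbeats 1000000
set_option synthInstance.maxHeartbeats 400000


open MeasureTheory

/-- Nested (iterated) Bochner integrals:
`nested n f t₀ t = ∫_{t₀}^{t} dt₁ ∫_{t₀}^{t₁} dt₂ ⋯ ∫_{t₀}^{t_{n−1}} dtₙ f(t₁,…,tₙ)`. -/
noncomputable def nested {F : Type*} [NormedAddCommGroup F] [NormedSpace ℝ F] :
    (n : ℕ) → ((Fin n → ℝ) → F) → ℝ → ℝ → F
  | 0, f, _, _ => f Fin.elim0
  | n + 1, f, t₀, t => ∫ s in t₀..t, nested n (fun u => f (Fin.cons s u)) t₀ s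

variable {E : Type*} [NormedAddCommGroup E] [NormedSpace ℂ E] [CompleteSpace E]

/-- The `n`-th Picard–Dyson term
`Uₙ(t,t₀) = (−i)ⁿ ∫_{t₀}^{t} dt₁ ∫_{t₀}^{t₁} dt₂ ⋯ ∫_{t₀}^{t_{n−1}} dtₙ H(t₁)⋯H(tₙ)`. -/
noncomputable def Uterm (H : ℝ → E →L[ℂ] E) (t₀ t : ℝ) (n : ℕ) : E →L[ℂ] E :=
  (-Complex.I) ^ n • nested n (fun u => (List.ofFn fun i => H (u i)).prod) t₀ t

/-- `θ_P(s) = Q = 1 − P` for `s > 0` and `θ_P(s) = −P` for `s ≤ 0`. -/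
noncomputable def thetaP (P : E →L[ℂ] E) (s : ℝ) : E →L[ℂ] E :=
  if 0 < s then 1 - P else -P

/-- `Cₙ(t,t₀) = (−i)ⁿ ∫_{[t₀,t]ⁿ} H(t₁) θ_P(t₁−t₂) H(t₂) ⋯ θ_P(t_{n−1}−tₙ) H(tₙ) dt₁⋯dtₙ`
(a Bochner integral over the cube `[t₀,t]ⁿ`). -/
noncomputable def Cterm (H : ℝ → E →L[ℂ] E) (P : E →L[ℂ] E) (t₀ t : ℝ) (n : ℕ) :
    E →L[ℂ] E :=
  (-Complex.I) ^ n •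
    ∫ u in Set.Icc (fun _ : Fin n => t₀) (fun _ => t),
      (List.ofFn fun i : Fin n =>
        H (u i) * if h : (i : ℕ) + 1 < n then thetaP P (u i - u ⟨(i : ℕ) + 1, h⟩) else 1).prod

namespace UPaux

variable (H : ℝ → E →L[ℂ] E) (P : E →L[ℂ] E) (t₀ t : ℝ)

/-- iterated integral with terminal `g` -/
noncomputable def nst : ℕ → (ℝ → E →L[ℂ] E) → ℝ → (E →L[ℂ] E)
  | 0, g, r => g r
  | n + 1, g, r => ∫ s in t₀..r, H s * nst n g s

/-- the θ-chain with `n+1` factors of `H` -/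
noncomputable def chn : (n : ℕ) → (Fin (n + 1) → ℝ) → (E →L[ℂ] E)
  | 0, u => H (u 0)
  | n + 1, u => H (u 0) * thetaP P (u 0 - u 1) * chn n (fun i => u i.succ)

lemma theta_norm_le (s : ℝ) : ‖thetaP P s‖ ≤ 1 + ‖P‖ := by
  unfold thetaP
  split
  · refine (norm_sub_le _ _).trans ?_
    have h1 : ‖(1 : E →L[ℂ] E)‖ ≤ 1 := by
      rw [ContinuousLinearMap.one_def]; exact ContinuousLinearMap.norm_id_le
    linarith
  · rw [norm_neg]; linarith [norm_nonneg P]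

lemma theta_sm : StronglyMeasurable (thetaP P) := by
  unfold thetaP
  exact StronglyMeasurable.ite (measurableSet_Ioi (a := (0:ℝ)))
    stronglyMeasurable_const stronglyMeasurable_const

lemma chn_sm (hH : Continuous H) : ∀ n, StronglyMeasurable (chn H P n) := by
  intro n
  induction n with
  | zero =>
    exact (hH.comp (continuous_apply _)).stronglyMeasurable
  | succ n ih =>
    refine StronglyMeasurable.mul (StronglyMeasurable.mul
      ((hH.comp (continuous_apply _)).stronglyMeasurable) ?_) ?_
    · exact (theta_sm P).comp_measurable
        ((measurable_pi_apply _).sub (measurable_pi_apply _))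
    · exact ih.comp_measurable
        (measurable_pi_lambda _ fun i => measurable_pi_apply _)

lemma chn_snoc : ∀ (n : ℕ) (u : Fin (n + 2) → ℝ),
    chn H P (n + 1) u =
      chn H P n (fun i => u i.castSucc) *
        thetaP P (u (Fin.last n).castSucc - u (Fin.last (n + 1))) *
        H (u (Fin.last (n + 1))) := by
  intro n
  induction n with
  | zero =>
    intro u
    simp only [chn]
    rw [mul_assoc]
    rfl
  | succ n ih =>
    intro u
    have l1 : chn H P (n+1+1) u
        = H (u 0) * thetaP P (u 0 - u 1) * chn H P (n+1) (fun i => u i.succ) := rfl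
    have r1 : (chn H P (n+1) fun i => u i.castSucc)
        = H (u ((0 : Fin (n+2)).castSucc)) *
            thetaP P (u ((0 : Fin (n+2)).castSucc) - u ((1 : Fin (n+2)).castSucc)) *
            chn H P n (fun i => u i.succ.castSucc) := rfl
    rw [l1, ih, r1]
    simp only [Fin.succ_castSucc, Fin.succ_last, Fin.castSucc_zero, Fin.castSucc_one, mul_assoc]


lemma chn_bound {M : ℝ} (hM : 0 ≤ M) (hHM : ∀ s ∈ Set.Icc t₀ t, ‖H s‖ ≤ M) :
    ∀ n (u : Fin (n + 1) → ℝ), (∀ i, u i ∈ Set.Icc t₀ t) →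
      ‖chn H P n u‖ ≤ M * ((1 + ‖P‖) * M) ^ n := by
  intro n
  induction n with
  | zero => intro u hu; simpa [chn] using hHM _ (hu 0)
  | succ n ih =>
    intro u hu
    have h1 : ‖chn H P (n+1) u‖ ≤ ‖H (u 0)‖ * ‖thetaP P (u 0 - u 1)‖ *
        ‖chn H P n (fun i => u i.succ)‖ := by
      exact (norm_mul_le _ _).trans (by gcongr; exact norm_mul_le _ _)
    have h2 := ih (fun i => u i.succ) (fun i => hu _)
    have h3 := hHM _ (hu 0)
    have h4 := theta_norm_le P (u 0 - u 1)
    calc ‖chn H P (n+1) u‖ ≤ M * (1 + ‖P‖) * (M * ((1 + ‖P‖) * M) ^ n) := by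
          refine h1.trans ?_
          exact mul_le_mul (mul_le_mul h3 h4 (norm_nonneg _) hM) h2 (norm_nonneg _)
            (by positivity)
      _ = M * ((1 + ‖P‖) * M) ^ (n + 1) := by ring

lemma volume_pi_restrict (m : ℕ) :
    (volume : Measure (Fin m → ℝ)).restrict (Set.Icc (fun _ => t₀) (fun _ => t))
      = Measure.pi (fun _ : Fin m => volume.restrict (Set.Icc t₀ t)) := by
  refine (Measure.pi_eq (μ := fun _ : Fin m => volume.restrict (Set.Icc t₀ t)) (fun s hs => ?_)).symm
  rw [← Set.pi_univ_Icc, Measure.restrict_apply (MeasurableSet.univ_pi hs),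
    ← Set.pi_inter_distrib, volume_pi, Measure.pi_pi]
  exact Finset.prod_congr rfl fun i _ => (Measure.restrict_apply (hs i)).symm

lemma integrable_of_bdd {α : Type*} [MeasurableSpace α] {ν : Measure α} [IsFiniteMeasure ν]
    {φ : α → E →L[ℂ] E} (hm : AEStronglyMeasurable φ ν) {C : ℝ}
    (h : ∀ᵐ x ∂ν, ‖φ x‖ ≤ C) : Integrable φ ν :=
  Integrable.mono' (integrable_const C) hm h

lemma nst_cont (hH : Continuous H) {g : ℝ → E →L[ℂ] E} (hg : Continuous g) :
    ∀ n, Continuous (nst H t₀ n g) := by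
  intro n
  induction n with
  | zero => exact hg
  | succ n ih =>
    show Continuous fun r => ∫ s in t₀..r, H s * nst H t₀ n g s
    exact intervalIntegral.continuous_primitive
      (fun a b => (hH.mul ih).intervalIntegrable a b) t₀

lemma nested_mul (hH : Continuous H) :
    ∀ (n : ℕ) (A : E →L[ℂ] E) (r : ℝ),
      nested n (fun u => A * (List.ofFn fun i => H (u i)).prod) t₀ r
        = A * nst H t₀ n (fun _ => 1) r := by
  intro n
  induction n with
  | zero => intro A r; simp [nested, nst]
  | succ n ih =>
    intro A r
    show (∫ s in t₀..r,
        nested n (fun u => (fun v => A * (List.ofFn fun i => H (v i)).prod) (Fin.cons s u)) t₀ s)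
      = A * nst H t₀ (n + 1) (fun _ => 1) r
    have key : ∀ s : ℝ,
        nested n (fun u => (fun v => A * (List.ofFn fun i => H (v i)).prod) (Fin.cons s u)) t₀ s
          = A * (H s * nst H t₀ n (fun _ => 1) s) := by
      intro s
      have e : (fun u : Fin n → ℝ =>
          (fun v => A * (List.ofFn fun i => H (v i)).prod) (Fin.cons s u))
          = fun u => (A * H s) * (List.ofFn fun i => H (u i)).prod := by
        funext u
        simp [List.ofFn_succ, Fin.cons_zero, Fin.cons_succ, mul_assoc]
      rw [e, ih, mul_assoc]
    simp only [key]
    have hint : IntervalIntegrable (fun s => H s * nst H t₀ n (fun _ => 1) s) volume t₀ r :=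
      (hH.mul (nst_cont H t₀ hH continuous_const n)).intervalIntegrable t₀ r
    calc (∫ s in t₀..r, A * (H s * nst H t₀ n (fun _ => 1) s))
        = A * ∫ s in t₀..r, H s * nst H t₀ n (fun _ => 1) s := by
          simpa using ContinuousLinearMap.intervalIntegral_comp_comm
            (ContinuousLinearMap.mul ℂ (E →L[ℂ] E) A) hint
      _ = A * nst H t₀ (n + 1) (fun _ => 1) r := rfl


/-- product of restricted Lebesgue measures on the cube `[t₀,t]^m` -/
noncomputable def cubeμ (m : ℕ) : Measure (Fin m → ℝ) :=
  Measure.pi (fun _ => volume.restrict (Set.Icc t₀ t))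

instance (m : ℕ) : IsFiniteMeasure (cubeμ t₀ t m) := by
  have : IsFiniteMeasure (volume.restrict (Set.Icc t₀ t)) :=
    ⟨by rw [Measure.restrict_apply_univ]; exact measure_Icc_lt_top⟩
  unfold cubeμ; infer_instance

lemma ae_cube_mem (m : ℕ) : ∀ᵐ u ∂(cubeμ t₀ t m), ∀ i, u i ∈ Set.Icc t₀ t := by
  rw [cubeμ, ← volume_pi_restrict t₀ t m]
  filter_upwards [ae_restrict_mem measurableSet_Icc] with u hu i
  exact ⟨hu.1 i, hu.2 i⟩

lemma integrable_cube {m : ℕ} {φ : (Fin m → ℝ) → E →L[ℂ] E} (hsm : StronglyMeasurable φ)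
    {C : ℝ} (hb : ∀ u, (∀ i, u i ∈ Set.Icc t₀ t) → ‖φ u‖ ≤ C) :
    Integrable φ (cubeμ t₀ t m) := by
  refine integrable_of_bdd hsm.aestronglyMeasurable (C := C) ?_
  filter_upwards [ae_cube_mem t₀ t m] with u hu
  exact hb u hu

lemma cube_peel {n : ℕ} {φ : (Fin (n + 2) → ℝ) → E →L[ℂ] E}
    (hφ : Integrable φ (cubeμ t₀ t (n + 2))) :
    ∫ u, φ u ∂(cubeμ t₀ t (n + 2))
      = ∫ v, (∫ s, φ (Fin.snoc v s) ∂(volume.restrict (Set.Icc t₀ t)))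
          ∂(cubeμ t₀ t (n + 1)) := by
  set μr := volume.restrict (Set.Icc t₀ t) with hμr
  have hmp := (measurePreserving_piFinSuccAbove (fun _ : Fin (n + 2) => μr)
    (Fin.last (n + 1))).symm
  have hemb := (MeasurableEquiv.piFinSuccAbove (fun _ : Fin (n + 2) => ℝ)
    (Fin.last (n + 1))).symm.measurableEmbedding
  have h1 : ∫ p : ℝ × (Fin (n+1) → ℝ),
      φ ((MeasurableEquiv.piFinSuccAbove (fun _ : Fin (n + 2) => ℝ)
        (Fin.last (n + 1))).symm p) ∂(μr.prod (cubeμ t₀ t (n+1)))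
      = ∫ u, φ u ∂(cubeμ t₀ t (n + 2)) := hmp.integral_comp hemb φ
  have h2 : Integrable (fun p : ℝ × (Fin (n+1) → ℝ) =>
      φ ((MeasurableEquiv.piFinSuccAbove (fun _ : Fin (n + 2) => ℝ)
        (Fin.last (n + 1))).symm p)) (μr.prod (cubeμ t₀ t (n+1))) := by
    exact (hmp.integrable_comp_emb hemb).mpr hφ
  have h3 : ∀ p : ℝ × (Fin (n+1) → ℝ),
      (MeasurableEquiv.piFinSuccAbove (fun _ : Fin (n + 2) => ℝ)
        (Fin.last (n + 1))).symm p = Fin.snoc p.2 p.1 := by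
    intro p
    simp [MeasurableEquiv.piFinSuccAbove_symm_apply, Fin.insertNthEquiv,
      Fin.insertNth_last']
  rw [← h1]
  simp only [h3]
  simp only [h3] at h2
  rw [MeasureTheory.integral_prod _ h2]
  exact MeasureTheory.integral_integral_swap (by exact h2)


lemma nst_one_apply (g : ℝ → E →L[ℂ] E) (r : ℝ) :
    nst H t₀ 1 g r = ∫ s in t₀..r, H s * g s := rfl

lemma inner_theta (hH : Continuous H) {g : ℝ → E →L[ℂ] E} (hg : Continuous g)
    {r : ℝ} (hr : r ∈ Set.Icc t₀ t) :
    (∫ s in Set.Icc t₀ t, thetaP P (r - s) * (H s * g s))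
      = nst H t₀ 1 g r - P * nst H t₀ 1 g t := by
  have hHg : Continuous fun s => H s * g s := hH.mul hg
  have hIcc : IntervalIntegrable (fun s => H s * g s) volume t₀ t :=
    hHg.intervalIntegrable t₀ t
  -- integrability of the θ-weighted integrand on `Icc t₀ t`
  have hsm : StronglyMeasurable fun s => thetaP P (r - s) * (H s * g s) :=
    ((theta_sm P).comp_measurable (measurable_const.sub measurable_id)).mul
      hHg.stronglyMeasurable
  obtain ⟨C, hC⟩ := isCompact_Icc.exists_bound_of_continuousOn
    (f := fun s => H s * g s) hHg.continuousOn
  have hint : IntegrableOn (fun s => thetaP P (r - s) * (H s * g s)) (Set.Icc t₀ t) := by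
    have : IsFiniteMeasure (volume.restrict (Set.Icc t₀ t)) :=
      ⟨by rw [Measure.restrict_apply_univ]; exact measure_Icc_lt_top⟩
    refine integrable_of_bdd hsm.aestronglyMeasurable
      (C := (1 + ‖P‖) * max C 0) ?_
    filter_upwards [ae_restrict_mem measurableSet_Icc] with s hs
    refine (norm_mul_le _ _).trans ?_
    exact mul_le_mul (theta_norm_le P _) ((hC s hs).trans (le_max_left _ _))
      (norm_nonneg _) (by positivity)
  have hdisj : Disjoint (Set.Ico t₀ r) (Set.Icc r t) := by
    rw [Set.disjoint_left]
    rintro s hs1 hs2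
    exact absurd hs1.2 (not_lt.2 hs2.1)
  rw [← Set.Ico_union_Icc_eq_Icc hr.1 hr.2,
    setIntegral_union hdisj measurableSet_Icc
      (hint.mono_set (Set.Ico_subset_Icc_self.trans (Set.Icc_subset_Icc_right hr.2)))
      (hint.mono_set (Set.Icc_subset_Icc_left hr.1))]
  have e1 : ∫ s in Set.Ico t₀ r, thetaP P (r - s) * (H s * g s)
      = (1 - P) * ∫ s in t₀..r, H s * g s := by
    rw [setIntegral_congr_fun measurableSet_Ico
      (g := fun s => (1 - P) * (H s * g s)) (fun s hs => by
        simp only [thetaP, if_pos (by linarith [hs.2] : (0:ℝ) < r - s)])]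
    rw [MeasureTheory.integral_Ico_eq_integral_Ioo,
      intervalIntegral.integral_of_le hr.1, MeasureTheory.integral_Ioc_eq_integral_Ioo]
    simpa only [ContinuousLinearMap.mul_apply'] using ContinuousLinearMap.integral_comp_comm
      (ContinuousLinearMap.mul ℂ (E →L[ℂ] E) (1 - P))
      ((hHg.integrableOn_Icc.mono_set Set.Ioo_subset_Icc_self).mono_set
        (Set.Ioo_subset_Ioo_right hr.2))
  have e2 : ∫ s in Set.Icc r t, thetaP P (r - s) * (H s * g s)
      = (-P) * ((∫ s in t₀..t, H s * g s) - ∫ s in t₀..r, H s * g s) := by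
    rw [setIntegral_congr_fun measurableSet_Icc
      (g := fun s => (-P) * (H s * g s)) (fun s hs => by
        simp only [thetaP, if_neg (by linarith [hs.1] : ¬ (0:ℝ) < r - s)])]
    rw [intervalIntegral.integral_interval_sub_left (hIcc)
      (hHg.intervalIntegrable t₀ r), intervalIntegral.integral_of_le hr.2,
      MeasureTheory.integral_Icc_eq_integral_Ioc]
    simpa using ContinuousLinearMap.integral_comp_comm
      (ContinuousLinearMap.mul ℂ (E →L[ℂ] E) (-P))
      ((hHg.integrableOn_Icc.mono_set Set.Ioc_subset_Icc_self).mono_set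
        (Set.Ioc_subset_Ioc_left hr.1))
  rw [e1, e2, nst_one_apply, nst_one_apply]
  set Jr := ∫ s in t₀..r, H s * g s
  set Jt := ∫ s in t₀..t, H s * g s
  simp only [sub_mul, mul_sub, one_mul, neg_mul]
  abel


lemma theta_integrable (hH : Continuous H) {g : ℝ → E →L[ℂ] E} (hg : Continuous g) (r : ℝ) :
    Integrable (fun s => thetaP P (r - s) * (H s * g s))
      (volume.restrict (Set.Icc t₀ t)) := by
  have hHg : Continuous fun s => H s * g s := hH.mul hg
  have hsm : StronglyMeasurable fun s => thetaP P (r - s) * (H s * g s) :=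
    ((theta_sm P).comp_measurable (measurable_const.sub measurable_id)).mul
      hHg.stronglyMeasurable
  obtain ⟨C, hC⟩ := isCompact_Icc.exists_bound_of_continuousOn
    (f := fun s => H s * g s) hHg.continuousOn
  have : IsFiniteMeasure (volume.restrict (Set.Icc t₀ t)) :=
    ⟨by rw [Measure.restrict_apply_univ]; exact measure_Icc_lt_top⟩
  refine integrable_of_bdd hsm.aestronglyMeasurable (C := (1 + ‖P‖) * max C 0) ?_
  filter_upwards [ae_restrict_mem measurableSet_Icc] with s hs
  refine (norm_mul_le _ _).trans ?_
  exact mul_le_mul (theta_norm_le P _) ((hC s hs).trans (le_max_left _ _))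
    (norm_nonneg _) (by positivity)

/-- cube integral of the θ-chain against a terminal function `g` -/
noncomputable def Dgm (n : ℕ) (g : ℝ → E →L[ℂ] E) : E →L[ℂ] E :=
  ∫ u, chn H P n u * g (u (Fin.last n)) ∂(cubeμ t₀ t (n + 1))

lemma Dgm_integrand_integrable (hH : Continuous H) {g : ℝ → E →L[ℂ] E}
    (hg : Continuous g) (n : ℕ) :
    Integrable (fun u : Fin (n+1) → ℝ => chn H P n u * g (u (Fin.last n)))
      (cubeμ t₀ t (n + 1)) := by
  obtain ⟨MH, hMH⟩ := isCompact_Icc.exists_bound_of_continuousOn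
    (f := H) hH.continuousOn
  obtain ⟨CG, hCG⟩ := isCompact_Icc.exists_bound_of_continuousOn
    (f := g) hg.continuousOn
  refine integrable_cube t₀ t
    ((chn_sm H P hH n).mul ((hg.comp (continuous_apply _)).stronglyMeasurable))
    (C := (max MH 0 * ((1 + ‖P‖) * max MH 0) ^ n) * max CG 0) ?_
  intro u hu
  refine (norm_mul_le _ _).trans ?_
  refine mul_le_mul (chn_bound H P t₀ t (le_max_right _ _)
    (fun s hs => (hMH s hs).trans (le_max_left _ _)) n u hu)
    ((hCG _ (hu _)).trans (le_max_left _ _)) (norm_nonneg _) (by positivity)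

lemma Dgm_const (hH : Continuous H) (n : ℕ) (A : E →L[ℂ] E) :
    Dgm H P t₀ t n (fun _ => A) = Dgm H P t₀ t n (fun _ => 1) * A := by
  unfold Dgm
  have h1 := Dgm_integrand_integrable H P t₀ t hH
    (g := fun _ => (1 : E →L[ℂ] E)) continuous_const n
  simpa using ContinuousLinearMap.integral_comp_comm
    ((ContinuousLinearMap.mul ℂ (E →L[ℂ] E)).flip A) h1

lemma nst_comp (j : ℕ) (g : ℝ → E →L[ℂ] E) (r : ℝ) :
    nst H t₀ j (nst H t₀ 1 g) r = nst H t₀ (j + 1) g r := by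
  induction j generalizing r with
  | zero => rfl
  | succ j ih =>
    show (∫ s in t₀..r, H s * nst H t₀ j (nst H t₀ 1 g) s)
      = ∫ s in t₀..r, H s * nst H t₀ (j+1) g s
    simp only [ih]

lemma Dgm_succ (hH : Continuous H) (hle : t₀ ≤ t) {g : ℝ → E →L[ℂ] E}
    (hg : Continuous g) (n : ℕ) :
    Dgm H P t₀ t (n + 1) g
      = Dgm H P t₀ t n (fun r => nst H t₀ 1 g r - P * nst H t₀ 1 g t) := by
  unfold Dgm
  rw [cube_peel t₀ t (Dgm_integrand_integrable H P t₀ t hH hg (n + 1))]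
  refine integral_congr_ae ?_
  filter_upwards [ae_cube_mem t₀ t (n + 1)] with v hv
  have hsnoc : ∀ s : ℝ,
      chn H P (n+1) (Fin.snoc v s) * g ((Fin.snoc v s : Fin (n+2) → ℝ) (Fin.last (n+1)))
        = chn H P n v * (thetaP P (v (Fin.last n) - s) * (H s * g s)) := by
    intro s
    rw [chn_snoc]
    have h1 : (fun i : Fin (n+1) => (Fin.snoc v s : Fin (n+2) → ℝ) i.castSucc) = v := by
      funext i; simp
    have h2 : (Fin.snoc v s : Fin (n+2) → ℝ) (Fin.last (n+1)) = s := by simp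
    have h3 : (Fin.snoc v s : Fin (n+2) → ℝ) ((Fin.last n).castSucc) = v (Fin.last n) := by simp
    rw [h1, h2, h3]
    simp only [mul_assoc]
  simp only [hsnoc]
  have hpull := ContinuousLinearMap.integral_comp_comm
    (ContinuousLinearMap.mul ℂ (E →L[ℂ] E) (chn H P n v))
    (theta_integrable H P t₀ t hH hg (v (Fin.last n)))
  simp only [ContinuousLinearMap.mul_apply'] at hpull
  rw [hpull, inner_theta H P t₀ t hH hg (hv (Fin.last n))]

lemma master (hH : Continuous H) (hle : t₀ ≤ t) :
    ∀ (n : ℕ) {g : ℝ → E →L[ℂ] E} (_ : Continuous g),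
      Dgm H P t₀ t n g = nst H t₀ (n + 1) g t
        - ∑ j ∈ Finset.range n,
            Dgm H P t₀ t (n - 1 - j) (fun _ => 1) * (P * nst H t₀ (j + 1) g t) := by
  intro n
  induction n with
  | zero =>
    intro g hg
    simp only [Finset.range_zero, Finset.sum_empty, sub_zero]
    unfold Dgm
    have hmp := measurePreserving_piUnique (fun _ : Fin 1 => volume.restrict (Set.Icc t₀ t))
    have h1 := hmp.integral_comp (MeasurableEquiv.piUnique _).measurableEmbedding
      (fun s => H s * g s)
    have h2 : (∫ u, chn H P 0 u * g (u (Fin.last 0)) ∂(cubeμ t₀ t 1))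
        = ∫ u : Fin 1 → ℝ, (fun s => H s * g s)
            ((MeasurableEquiv.piUnique (fun _ : Fin 1 => ℝ)) u)
            ∂(Measure.pi fun _ : Fin 1 => volume.restrict (Set.Icc t₀ t)) := rfl
    rw [h2, h1]
    show (∫ s in Set.Icc t₀ t, H s * g s) = nst H t₀ 1 g t
    rw [MeasureTheory.integral_Icc_eq_integral_Ioc, ← intervalIntegral.integral_of_le hle,
      nst_one_apply]
  | succ n ih =>
    intro g hg
    rw [Dgm_succ H P t₀ t hH hle hg n]
    have hnst1 : Continuous (nst H t₀ 1 g) := nst_cont H t₀ hH hg 1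
    have hlin : Dgm H P t₀ t n (fun r => nst H t₀ 1 g r - P * nst H t₀ 1 g t)
        = Dgm H P t₀ t n (nst H t₀ 1 g)
            - Dgm H P t₀ t n (fun _ => P * nst H t₀ 1 g t) := by
      unfold Dgm
      rw [← integral_sub (Dgm_integrand_integrable H P t₀ t hH hnst1 n)
        (Dgm_integrand_integrable H P t₀ t hH continuous_const n)]
      congr 1; funext u; rw [mul_sub]
    rw [hlin, ih hnst1, Dgm_const H P t₀ t hH]
    simp only [nst_comp]
    rw [Finset.sum_range_succ']
    have hre : ∀ j ∈ Finset.range n,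
        Dgm H P t₀ t (n + 1 - 1 - (j + 1)) (fun _ => 1)
            * (P * nst H t₀ (j + 1 + 1) g t)
          = Dgm H P t₀ t (n - 1 - j) (fun _ => 1) * (P * nst H t₀ (j + 2) g t) := by
      intro j hj
      congr 2
      omega
    rw [Finset.sum_congr rfl hre]
    simp only [Nat.add_sub_cancel, Nat.sub_zero]
    rw [sub_sub]


lemma ofFn_eq_chn : ∀ (n : ℕ) (u : Fin (n + 1) → ℝ),
    (List.ofFn fun i : Fin (n + 1) =>
        H (u i) * if h : (i : ℕ) + 1 < n + 1 then thetaP P (u i - u ⟨(i : ℕ) + 1, h⟩)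
          else 1).prod
      = chn H P n u := by
  intro n
  induction n with
  | zero =>
    intro u
    simp [chn, List.ofFn_succ]
  | succ n ih =>
    intro u
    rw [List.ofFn_succ, List.prod_cons]
    have e : (fun i : Fin (n+1) =>
        H (u i.succ) * if h : (i.succ : ℕ) + 1 < n + 2 then
          thetaP P (u i.succ - u ⟨(i.succ : ℕ) + 1, h⟩) else 1)
        = (fun i : Fin (n+1) =>
            H ((fun j => u j.succ) i) * if h : (i : ℕ) + 1 < n + 1 then
              thetaP P ((fun j : Fin (n+1) => u j.succ) i - (fun j : Fin (n+1) => u j.succ) ⟨(i : ℕ) + 1, h⟩)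
            else 1) := by
      funext i
      by_cases h : (i : ℕ) + 1 < n + 1
      · rw [dif_pos (by simp [Fin.val_succ]; omega), dif_pos h]
        congr 2
      · rw [dif_neg (by simp [Fin.val_succ]; omega), dif_neg h]
    rw [e, ih (fun j => u j.succ)]
    rw [dif_pos (show ((0 : Fin (n+2)) : ℕ) + 1 < n + 2 by simp)]
    show H (u 0) * thetaP P (u 0 - u ⟨1, _⟩) * chn H P n (fun j => u j.succ)
      = chn H P (n+1) u
    simp only [Fin.mk_one]
    rfl

lemma Cterm_eq_Dgm (n : ℕ) :
    Cterm H P t₀ t (n + 1)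
      = (-Complex.I) ^ (n + 1) • Dgm H P t₀ t n (fun _ => 1) := by
  unfold Cterm Dgm
  congr 1
  show ∫ u, _ ∂((volume : Measure (Fin (n+1) → ℝ)).restrict _) = _
  rw [volume_pi_restrict t₀ t (n+1)]
  show ∫ u, _ ∂(cubeμ t₀ t (n+1)) = _
  refine integral_congr_ae (Filter.Eventually.of_forall fun u => ?_)
  simp only [ofFn_eq_chn H P, mul_one]

lemma Uterm_eq_nst (hH : Continuous H) (n : ℕ) :
    Uterm H t₀ t n = (-Complex.I) ^ n • nst H t₀ n (fun _ => 1) t := by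
  unfold Uterm
  congr 1
  have h2 : (fun u : Fin n → ℝ => (List.ofFn fun i => H (u i)).prod)
      = fun u => (1 : E →L[ℂ] E) * (List.ofFn fun i => H (u i)).prod := by
    funext u; rw [one_mul]
  rw [h2, nested_mul H t₀ hH n 1 t]
  rw [one_mul]

lemma Cterm_rec (hH : Continuous H) (hle : t₀ ≤ t) (n : ℕ) :
    Cterm H P t₀ t (n + 1) = Uterm H t₀ t (n + 1)
      - ∑ j ∈ Finset.range n, Cterm H P t₀ t (n - j) * (P * Uterm H t₀ t (j + 1)) := by
  rw [Cterm_eq_Dgm H P t₀ t n,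
    master H P t₀ t hH hle n (g := fun _ => (1 : E →L[ℂ] E)) continuous_const,
    smul_sub, Finset.smul_sum]
  congr 1
  · exact (Uterm_eq_nst H t₀ t hH (n+1)).symm
  · refine Finset.sum_congr rfl fun j hj => ?_
    have hjn : j < n := Finset.mem_range.1 hj
    have hidx : n - j = (n - 1 - j) + 1 := by omega
    rw [hidx, Cterm_eq_Dgm H P t₀ t (n - 1 - j), Uterm_eq_nst H t₀ t hH (j + 1)]
    rw [smul_mul_assoc, mul_smul_comm, mul_smul_comm, smul_smul, ← pow_add]
    congr 2
    omega

lemma nst_norm_le (hle : t₀ ≤ t) {M : ℝ} (hM : 0 ≤ M)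
    (hHM : ∀ s ∈ Set.Icc t₀ t, ‖H s‖ ≤ M) :
    ∀ n, ∀ r ∈ Set.Icc t₀ t,
      ‖nst H t₀ n (fun _ => (1 : E →L[ℂ] E)) r‖ ≤ M ^ n * (r - t₀) ^ n / n.factorial := by
  intro n
  induction n with
  | zero =>
    intro r _
    simpa [nst, ContinuousLinearMap.one_def] using ContinuousLinearMap.norm_id_le
  | succ n ih =>
    intro r hr
    show ‖∫ s in t₀..r, H s * nst H t₀ n (fun _ => 1) s‖ ≤ _
    have hbound : ∀ᵐ s ∂(volume.restrict (Set.uIoc t₀ r)),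
        ‖H s * nst H t₀ n (fun _ => 1) s‖
          ≤ M * (M ^ n * (s - t₀) ^ n / n.factorial) := by
      filter_upwards [ae_restrict_mem measurableSet_uIoc] with s hs
      rw [Set.uIoc_of_le hr.1] at hs
      have hsIcc : s ∈ Set.Icc t₀ t := ⟨le_of_lt hs.1, hs.2.trans hr.2⟩
      exact (norm_mul_le _ _).trans
        (mul_le_mul (hHM s hsIcc) (ih s hsIcc) (norm_nonneg _)  hM)
    have hgint : IntervalIntegrable
        (fun s => M * (M ^ n * (s - t₀) ^ n / n.factorial)) volume t₀ r := by
      apply Continuous.intervalIntegrable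
      continuity
    refine (intervalIntegral.norm_integral_le_abs_of_norm_le hbound hgint).trans ?_
    have hcomp : (∫ s in t₀..r, M * (M ^ n * (s - t₀) ^ n / n.factorial))
        = (M * (M ^ n / n.factorial)) * ((r - t₀) ^ (n + 1) / (n + 1)) := by
      have : ∀ s : ℝ, M * (M ^ n * (s - t₀) ^ n / n.factorial)
          = (M * (M ^ n / n.factorial)) * (s - t₀) ^ n := by intro s; ring
      simp only [this]
      rw [intervalIntegral.integral_const_mul]
      rw [intervalIntegral.integral_comp_sub_right (fun x => x ^ n) t₀]
      rw [integral_pow]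
      simp [sub_self]
    have h1 : (0:ℝ) ≤ r - t₀ := by linarith [hr.1]
    have h2 : (0:ℝ) ≤ M * (M ^ n / n.factorial) * ((r - t₀) ^ (n + 1) / (n + 1)) := by
      have h3 := pow_nonneg h1 (n + 1)
      positivity
    rw [hcomp, abs_of_nonneg h2, Nat.factorial_succ]
    apply le_of_eq
    have hfac : ((n.factorial : ℝ)) ≠ 0 := Nat.cast_ne_zero.2 n.factorial_ne_zero
    push_cast
    field_simp
    ring


theorem UP_eq' (hH : Continuous H) (hP : P * P = P) (hle : t₀ ≤ t)
    (hC : Summable fun n : ℕ => ‖Cterm H P t₀ t (n + 1)‖) :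
    (1 + ∑' n : ℕ, Uterm H t₀ t (n + 1)) * P =
      (P + (1 - P) * (∑' n : ℕ, Cterm H P t₀ t (n + 1)) * P) *
        (P * (1 + ∑' n : ℕ, Uterm H t₀ t (n + 1)) * P) := by
  classical
  obtain ⟨M0, hM0⟩ := isCompact_Icc.exists_bound_of_continuousOn (f := H) hH.continuousOn
  set M : ℝ := max M0 0 with hMdef
  have hM : 0 ≤ M := le_max_right _ _
  have hHM : ∀ s ∈ Set.Icc t₀ t, ‖H s‖ ≤ M := fun s hs => (hM0 s hs).trans (le_max_left _ _)
  have hUnorm : ∀ n : ℕ, ‖Uterm H t₀ t n‖ ≤ (M * (t - t₀)) ^ n / n.factorial := by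
    intro n
    have h1 : ‖Uterm H t₀ t n‖ = ‖nst H t₀ n (fun _ => (1 : E →L[ℂ] E)) t‖ := by
      rw [Uterm_eq_nst H t₀ t hH n,
        norm_smul ((-Complex.I) ^ n) (nst H t₀ n (fun _ => (1 : E →L[ℂ] E)) t)]
      simp
    rw [h1]
    refine (nst_norm_le H t₀ t hle hM hHM n t ⟨hle, le_refl t⟩).trans (le_of_eq ?_)
    rw [mul_pow]
  have hUsum : Summable fun n : ℕ => ‖Uterm H t₀ t (n + 1)‖ := by
    have h2 : Summable fun n : ℕ => (M * (t - t₀)) ^ (n + 1) / (n + 1).factorial :=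
      (summable_nat_add_iff 1).2 (Real.summable_pow_div_factorial (M * (t - t₀)))
    exact Summable.of_nonneg_of_le (fun n => norm_nonneg _) (fun n => hUnorm (n + 1)) h2
  have hu_sum : Summable fun n => Uterm H t₀ t (n + 1) := hUsum.of_norm
  have hc_sum : Summable fun n => Cterm H P t₀ t (n + 1) := hC.of_norm
  have hPU : Summable fun n : ℕ => ‖P * Uterm H t₀ t (n + 1)‖ :=
    Summable.of_nonneg_of_le (fun _ => norm_nonneg _) (fun n => norm_mul_le _ _)
      (hUsum.mul_left ‖P‖)
  have hcauchy : (∑' n, Cterm H P t₀ t (n + 1)) * (∑' n, P * Uterm H t₀ t (n + 1))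
      = ∑' N, ∑ kl ∈ Finset.HasAntidiagonal.antidiagonal N,
          Cterm H P t₀ t (kl.1 + 1) * (P * Uterm H t₀ t (kl.2 + 1)) :=
    tsum_mul_tsum_eq_tsum_sum_antidiagonal_of_summable_norm hC hPU
  have hrec : ∀ N : ℕ, ∑ kl ∈ Finset.HasAntidiagonal.antidiagonal N,
      Cterm H P t₀ t (kl.1 + 1) * (P * Uterm H t₀ t (kl.2 + 1))
        = Uterm H t₀ t (N + 1 + 1) - Cterm H P t₀ t (N + 1 + 1) := by
    intro N
    rw [Finset.Nat.sum_antidiagonal_eq_sum_range_succ_mk]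
    have h3 := Cterm_rec H P t₀ t hH hle (N + 1)
    have h4 : ∑ k ∈ Finset.range (N + 1),
        Cterm H P t₀ t (k + 1) * (P * Uterm H t₀ t (N - k + 1))
          = ∑ j ∈ Finset.range (N + 1),
              Cterm H P t₀ t (N + 1 - j) * (P * Uterm H t₀ t (j + 1)) := by
      rw [← Finset.sum_range_reflect
        (fun j => Cterm H P t₀ t (N + 1 - j) * (P * Uterm H t₀ t (j + 1))) (N + 1)]
      refine Finset.sum_congr rfl fun j hj => ?_
      have hj' : j < N + 1 := Finset.mem_range.1 hj
      have e1 : N + 1 - (N + 1 - 1 - j) = j + 1 := by omega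
      have e2 : N + 1 - 1 - j + 1 = N - j + 1 := by omega
      rw [e1, e2]
    rw [h4, h3]
    abel
  have htsum : (∑' n, Cterm H P t₀ t (n + 1)) * (P * ∑' n, Uterm H t₀ t (n + 1))
      = (∑' n, Uterm H t₀ t (n + 1)) - ∑' n, Cterm H P t₀ t (n + 1) := by
    rw [← Summable.tsum_mul_left P hu_sum, hcauchy, tsum_congr hrec,
      Summable.tsum_sub ((summable_nat_add_iff 1).2 hu_sum) ((summable_nat_add_iff 1).2 hc_sum)]
    have hu0 : ∑' n, Uterm H t₀ t (n + 1)
        = Uterm H t₀ t (0 + 1) + ∑' n, Uterm H t₀ t (n + 1 + 1) := Summable.tsum_eq_zero_add hu_sum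
    have hc0 : ∑' n, Cterm H P t₀ t (n + 1)
        = Cterm H P t₀ t (0 + 1) + ∑' n, Cterm H P t₀ t (n + 1 + 1) := Summable.tsum_eq_zero_add hc_sum
    have h00 : Uterm H t₀ t (0 + 1) = Cterm H P t₀ t (0 + 1) := by
      simpa using (Cterm_rec H P t₀ t hH hle 0).symm
    rw [hu0, hc0, h00]
    abel
  have main : ∀ V K : E →L[ℂ] E, K * (P * V) = V - K →
      (1 + V) * P = (P + (1 - P) * K * P) * (P * (1 + V) * P) := by
    intro V K hkey
    have hPP' : ∀ X : E →L[ℂ] E, P * (P * X) = P * X := fun X => by rw [← mul_assoc, hP]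
    have hK2 : K * (P * (V * P)) = V * P - K * P := by
      rw [show P * (V * P) = P * V * P from (mul_assoc _ _ _).symm, ← mul_assoc, hkey, sub_mul]
    simp only [mul_add, add_mul, sub_mul, mul_sub, one_mul, mul_one, mul_assoc, hPP', hP, hK2]
    abel
  exact main _ _ htsum

end UPaux

/-- With `U(t,t₀) = 1 + Σ_{n≥1} Uₙ(t,t₀)` and `K(t,t₀) = Σ_{n≥1} Cₙ(t,t₀)`
(assuming `Σ_{n≥1} ‖Cₙ(t,t₀)‖ < ∞`), one has
`U(t,t₀) P = (P + Q K(t,t₀) P) · (P U(t,t₀) P)` where `Q = 1 − P`. -/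
theorem UP_eq (H : ℝ → E →L[ℂ] E) (hH : Continuous H)
    (P : E →L[ℂ] E) (hP : P * P = P) (t₀ t : ℝ) (hle : t₀ ≤ t)
    (hC : Summable fun n : ℕ => ‖Cterm H P t₀ t (n + 1)‖) :
    (1 + ∑' n : ℕ, Uterm H t₀ t (n + 1)) * P =
      (P + (1 - P) * (∑' n : ℕ, Cterm H P t₀ t (n + 1)) * P) *
        (P * (1 + ∑' n : ℕ, Uterm H t₀ t (n + 1)) * P) := by
  exact UPaux.UP_eq' H P t₀ t hH hP hle hC
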